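/- Let a ∈ (0,2) with a ≠ 1, let C, λ₊, λ₋, μ₊, μ₋ > 0, T > 0 and α ∈ (−1,1), and set p = (1−α)/2, q = (1+α)/2. Define r : ℝ → ℝ by r(x) = exp(−(λ₊−μ₊)x) for x > 0 and r(x) = exp(−(λ₋−μ₋)|x|) for x < 0, and let ℓ̃(x) = C·e^{−μ₊x}·x^{−a−1} for x > 0, ℓ̃(x) = C·e^{−μ₋|x|}·|x|^{−a−1} for x < 0, ℓ̃(0) = 0. Then (4T/(1−α²))·∫_ℝ (p·r(x) + q − r(x)^p)·ℓ̃(x) dx = (4T·C·Γ(−a)/(1−α²))·( (p·λ₊^{a} + q·μ₊^{a} − (pλ₊+qμ₊)^{a}) + (p·λ₋^{a} + q·μ₋^{a} − (pλ₋+qμ₋)^{a}) ). -/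

import Mathlib

open MeasureTheory Real Set

open Filter Topology


/-- `1 - t ≤ exp (-t)` for all `t`. -/
lemma cts_exp_ge (t : ℝ) : 1 - t ≤ exp (-t) := by
  have := Real.add_one_le_exp (-t); linarith

/-- Second-order upper Taylor bound for `exp (-t)` on `t ≥ 0`. -/
lemma cts_exp_le (t : ℝ) (ht : 0 ≤ t) : exp (-t) ≤ 1 - t + t ^ 2 / 2 := by
  set g : ℝ → ℝ := fun u => 1 - u + u ^ 2 / 2 - exp (-u) with hg
  have hder : ∀ s : ℝ, HasDerivAt g (-1 + s + exp (-s)) s := by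
    intro s
    have h1 : HasDerivAt (fun u : ℝ => 1 - u) (-1) s := by
      simpa using (hasDerivAt_id s).const_sub 1
    have h2 : HasDerivAt (fun u : ℝ => u ^ 2 / 2) s s := by
      simpa using (hasDerivAt_pow 2 s).div_const 2
    have h3 : HasDerivAt (fun u : ℝ => exp (-u)) (-exp (-s)) s := by
      simpa using ((hasDerivAt_id s).neg).exp
    have := (h1.add h2).sub h3
    exact this.congr_deriv (by ring)
  have hmono : Monotone g := by
    apply monotone_of_deriv_nonneg
    · exact fun s => (hder s).differentiableAt
    · intro s
      rw [(hder s).deriv]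
      have := cts_exp_ge s; linarith
  have h0 : g 0 = 0 := by simp [hg]
  have := hmono ht
  rw [h0] at this
  simp only [hg] at this
  linarith

lemma cts_exp_le_one (t : ℝ) (ht : 0 ≤ t) : exp (-t) ≤ 1 :=
  Real.exp_le_one_iff.mpr (by linarith)

/-- Integrability helper: power bound near 0, exponential bound at infinity. -/
lemma cts_integrableOn_helper (f : ℝ → ℝ) (K m c : ℝ) (hm : 0 < m) (hc : (-1:ℝ) < c)
    (hcont : ContinuousOn f (Ioi 0))
    (h0 : ∀ x : ℝ, 0 < x → x ≤ 1 → |f x| ≤ K * x ^ c)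
    (h1 : ∀ x : ℝ, 1 ≤ x → |f x| ≤ K * exp (-(m * x))) :
    IntegrableOn f (Ioi (0:ℝ)) := by
  have hmeas : AEStronglyMeasurable f (volume.restrict (Ioi 0)) :=
    hcont.aestronglyMeasurable measurableSet_Ioi
  rw [← Ioc_union_Ioi_eq_Ioi (zero_le_one (α := ℝ)), integrableOn_union]
  constructor
  · have hint : IntegrableOn (fun x : ℝ => K * x ^ c) (Ioc (0:ℝ) 1) := by
      have h := intervalIntegral.intervalIntegrable_rpow' (a := (0:ℝ)) (b := 1) hc
      rw [intervalIntegrable_iff_integrableOn_Ioc_of_le zero_le_one] at h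
      exact h.const_mul K
    refine Integrable.mono hint (hmeas.mono_set Ioc_subset_Ioi_self) ?_
    rw [ae_restrict_iff' measurableSet_Ioc]
    filter_upwards with x hx
    have := h0 x hx.1 hx.2
    calc ‖f x‖ = |f x| := rfl
      _ ≤ K * x ^ c := this
      _ ≤ ‖K * x ^ c‖ := le_abs_self _
  · have hint : IntegrableOn (fun x : ℝ => K * exp (-(m * x))) (Ioi (1:ℝ)) := by
      have h := exp_neg_integrableOn_Ioi 1 hm
      exact IntegrableOn.congr_fun (h.const_mul K) (fun x _ => by rw [neg_mul]) measurableSet_Ioi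
    refine Integrable.mono hint (hmeas.mono_set (Ioi_subset_Ioi zero_le_one)) ?_
    rw [ae_restrict_iff' measurableSet_Ioi]
    filter_upwards with x hx
    have := h1 x hx.le
    calc ‖f x‖ = |f x| := rfl
      _ ≤ K * exp (-(m * x)) := this
      _ ≤ ‖K * exp (-(m * x))‖ := le_abs_self _



/-- A combination of three exponentials. -/
noncomputable def triExp (A B D c₁ c₂ c₃ : ℝ) (x : ℝ) : ℝ :=
  c₁ * exp (-(A * x)) + c₂ * exp (-(B * x)) + c₃ * exp (-(D * x))

lemma triExp_hasDerivAt (A B D c₁ c₂ c₃ x : ℝ) :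
    HasDerivAt (triExp A B D c₁ c₂ c₃)
      (triExp A B D (-(A * c₁)) (-(B * c₂)) (-(D * c₃)) x) x := by
  have h : ∀ θ : ℝ, HasDerivAt (fun y : ℝ => exp (-(θ * y))) (-θ * exp (-(θ * x))) x := by
    intro θ
    have h1 : HasDerivAt (fun y : ℝ => -(θ * y)) (-θ) x := by
      exact ((hasDerivAt_id x).const_mul θ).neg.congr_deriv (by ring)
    simpa [mul_comm] using h1.exp
  have := (((h A).const_mul c₁).add ((h B).const_mul c₂)).add ((h D).const_mul c₃)
  exact this.congr_deriv (by unfold triExp; ring)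

lemma triExp_continuous (A B D c₁ c₂ c₃ : ℝ) : Continuous (triExp A B D c₁ c₂ c₃) := by
  unfold triExp; fun_prop

lemma triExp_rpow_tendsto (A B D c₁ c₂ c₃ s d : ℝ) (hA : 0 < A) (hB : 0 < B) (hD : 0 < D) :
    Tendsto (fun x => triExp A B D c₁ c₂ c₃ x * (x ^ s / d)) atTop (𝓝 0) := by
  have h1 := tendsto_rpow_mul_exp_neg_mul_atTop_nhds_zero s A hA
  have h2 := tendsto_rpow_mul_exp_neg_mul_atTop_nhds_zero s B hB
  have h3 := tendsto_rpow_mul_exp_neg_mul_atTop_nhds_zero s D hD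
  have h := ((h1.const_mul (c₁ / d)).add (h2.const_mul (c₂ / d))).add (h3.const_mul (c₃ / d))
  simp only [neg_mul] at h
  rw [show (c₁ / d * 0 + c₂ / d * 0 + c₃ / d * 0 : ℝ) = 0 by ring] at h
  refine h.congr fun x => ?_
  unfold triExp; ring

/-- Continuity within `Ici 0` at `0` from a vanishing power bound. -/
lemma cts_cwa_zero (F : ℝ → ℝ) (K e : ℝ) (he : 0 < e) (hF0 : F 0 = 0)
    (hb : ∀ x : ℝ, 0 < x → x ≤ 1 → |F x| ≤ K * x ^ e) :
    ContinuousWithinAt F (Ici 0) 0 := by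
  rw [ContinuousWithinAt, hF0]
  have hg : Tendsto (fun x : ℝ => K * x ^ e) (𝓝[Ici 0] 0) (𝓝 0) := by
    have hc : ContinuousAt (fun x : ℝ => x ^ e) 0 :=
      Real.continuousAt_rpow_const 0 e (Or.inr he.le)
    have := (hc.tendsto.const_mul K).mono_left (nhdsWithin_le_nhds (s := Ici (0:ℝ)))
    simpa [Real.zero_rpow he.ne'] using this
  apply squeeze_zero_norm' _ hg
  filter_upwards [Icc_mem_nhdsGE (zero_lt_one (α := ℝ))] with x hx
  rcases eq_or_lt_of_le hx.1 with h | h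
  · simp [← h, hF0, Real.zero_rpow he.ne']
  · exact hb x h hx.2

/-- FTC on `(0, ∞)` with vanishing boundary values. -/
lemma cts_ibp_zero (F g : ℝ → ℝ) (hder : ∀ x ∈ Ioi (0:ℝ), HasDerivAt F (g x) x)
    (hcont : ContinuousWithinAt F (Ici 0) 0) (hF0 : F 0 = 0)
    (hint : IntegrableOn g (Ioi 0)) (hlim : Tendsto F atTop (𝓝 0)) :
    ∫ x in Ioi (0:ℝ), g x = 0 := by
  have := integral_Ioi_of_hasDerivAt_of_tendsto hcont hder hint hlim
  rw [this, hF0, sub_zero]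

lemma cts_rpow_congr {x e₁ e₂ : ℝ} (h : e₁ = e₂) : x ^ e₁ = x ^ e₂ := by rw [h]


set_option maxHeartbeats 1000000 in
lemma cts_key {a A B p q : ℝ} (ha₀ : 0 < a) (ha₂ : a < 2) (ha₁ : a ≠ 1)
    (hA : 0 < A) (hB : 0 < B) (hp : 0 < p) (hq : 0 < q) (hpq : p + q = 1) :
    IntegrableOn (fun x : ℝ => triExp A B (p*A+q*B) p q (-1) x * x ^ (-a-1)) (Ioi 0)
    ∧ ∫ x in Ioi (0:ℝ), triExp A B (p*A+q*B) p q (-1) x * x ^ (-a-1)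
        = Gamma (-a) * (p * A ^ a + q * B ^ a - (p*A+q*B) ^ a) := by
  have ha0' : a ≠ 0 := ha₀.ne'
  have h1a : (1:ℝ) - a ≠ 0 := sub_ne_zero_of_ne (Ne.symm ha₁)
  set D : ℝ := p*A+q*B with hD
  have hD0 : 0 < D := by rw [hD]; positivity
  set m : ℝ := min A (min B D) with hm'
  have hm : 0 < m := lt_min hA (lt_min hB hD0)
  have hmA : m ≤ A := min_le_left _ _
  have hmB : m ≤ B := le_trans (min_le_right _ _) (min_le_left _ _)
  have hmD : m ≤ D := le_trans (min_le_right _ _) (min_le_right _ _)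
  set K : ℝ := p*A^2 + q*B^2 + D^2 with hK'
  have hK0 : 0 < K := by rw [hK']; positivity
  clear_value D m K
  -- bounds
  have hbu : ∀ x : ℝ, 0 ≤ x → |triExp A B D p q (-1) x| ≤ (K/2) * x^2 := by
    intro x hx
    have eA := cts_exp_le (A*x) (by positivity)
    have eA' := cts_exp_ge (A*x)
    have eB := cts_exp_le (B*x) (by positivity)
    have eB' := cts_exp_ge (B*x)
    have eD := cts_exp_le (D*x) (by positivity)
    have eD' := cts_exp_ge (D*x)
    simp only [triExp]
    rw [abs_le]
    constructor
    · nlinarith [mul_le_mul_of_nonneg_left eA' hp.le, mul_le_mul_of_nonneg_left eB' hq.le,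
        mul_nonneg (mul_nonneg hp.le (sq_nonneg A)) (sq_nonneg x),
        mul_nonneg (mul_nonneg hq.le (sq_nonneg B)) (sq_nonneg x), eD]
    · nlinarith [mul_le_mul_of_nonneg_left eA hp.le, mul_le_mul_of_nonneg_left eB hq.le,
        mul_nonneg (sq_nonneg D) (sq_nonneg x), eD']
  have hbu' : ∀ x : ℝ, 0 ≤ x →
      |triExp A B D (-(A*p)) (-(B*q)) (-(D*(-1))) x| ≤ K * x := by
    intro x hx
    have eA' := cts_exp_ge (A*x)
    have eB' := cts_exp_ge (B*x)
    have eD' := cts_exp_ge (D*x)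
    have eA1 := cts_exp_le_one (A*x) (by positivity)
    have eB1 := cts_exp_le_one (B*x) (by positivity)
    have eD1 := cts_exp_le_one (D*x) (by positivity)
    simp only [triExp]
    rw [abs_le]
    constructor <;>
      nlinarith [mul_le_mul_of_nonneg_left eA' (mul_nonneg hA.le hp.le),
        mul_le_mul_of_nonneg_left eA1 (mul_nonneg hA.le hp.le),
        mul_le_mul_of_nonneg_left eB' (mul_nonneg hB.le hq.le),
        mul_le_mul_of_nonneg_left eB1 (mul_nonneg hB.le hq.le),
        mul_le_mul_of_nonneg_left eD' hD0.le,
        mul_le_mul_of_nonneg_left eD1 hD0.le]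
  have hexpm : ∀ (θ x : ℝ), m ≤ θ → 0 ≤ x → exp (-(θ*x)) ≤ exp (-(m*x)) := by
    intro θ x hθ hx
    exact exp_le_exp.mpr (by nlinarith)
  have hbuexp : ∀ x : ℝ, 0 ≤ x → |triExp A B D p q (-1) x| ≤ 2 * exp (-(m*x)) := by
    intro x hx
    have hAm := hexpm A x hmA hx
    have hBm := hexpm B x hmB hx
    have hDm := hexpm D x hmD hx
    simp only [triExp]
    rw [abs_le]
    constructor <;>
      nlinarith [exp_pos (-(A*x)), exp_pos (-(B*x)), exp_pos (-(D*x)), exp_pos (-(m*x)),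
        mul_le_mul_of_nonneg_left hAm hp.le, mul_le_mul_of_nonneg_left hBm hq.le,
        mul_pos hp (exp_pos (-(A*x))), mul_pos hq (exp_pos (-(B*x)))]
  have hbu'exp : ∀ x : ℝ, 0 ≤ x →
      |triExp A B D (-(A*p)) (-(B*q)) (-(D*(-1))) x| ≤ (A*p+B*q+D) * exp (-(m*x)) := by
    intro x hx
    have hAm := hexpm A x hmA hx
    have hBm := hexpm B x hmB hx
    have hDm := hexpm D x hmD hx
    simp only [triExp]
    rw [abs_le]
    constructor <;>
      nlinarith [exp_pos (-(A*x)), exp_pos (-(B*x)), exp_pos (-(D*x)), exp_pos (-(m*x)),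
        mul_le_mul_of_nonneg_left hAm (mul_nonneg hA.le hp.le),
        mul_le_mul_of_nonneg_left hBm (mul_nonneg hB.le hq.le),
        mul_le_mul_of_nonneg_left hDm hD0.le,
        mul_pos (mul_pos hA hp) (exp_pos (-(A*x))),
        mul_pos (mul_pos hB hq) (exp_pos (-(B*x))),
        mul_pos hD0 (exp_pos (-(D*x)))]
  -- continuity of products with rpow on Ioi 0
  have hrpowCont : ∀ c : ℝ, ContinuousOn (fun x : ℝ => x ^ c) (Ioi 0) := by
    intro c x hx
    exact (Real.continuousAt_rpow_const x c (Or.inl (ne_of_gt hx))).continuousWithinAt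
  -- Integrability 1
  have Int1 : IntegrableOn (fun x : ℝ => triExp A B D p q (-1) x * x ^ (-a-1)) (Ioi 0) := by
    apply cts_integrableOn_helper _ (K+2) m (1-a) hm (by linarith)
    · exact ((triExp_continuous A B D p q (-1)).continuousOn).mul (hrpowCont (-a-1))
    · intro x hx hx1
      have hxr : (0:ℝ) ≤ x ^ (-a-1) := rpow_nonneg hx.le _
      have h2 : x^(2:ℕ) * x ^ (-a-1) = x ^ (1-a) := by
        rw [← Real.rpow_natCast x 2, ← Real.rpow_add hx]
        exact cts_rpow_congr (by push_cast; ring)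
      have hb := hbu x hx.le
      have h1a' : (0:ℝ) ≤ x ^ (1-a) := rpow_nonneg hx.le _
      calc |triExp A B D p q (-1) x * x ^ (-a-1)|
          = |triExp A B D p q (-1) x| * x ^ (-a-1) := by rw [abs_mul, abs_of_nonneg hxr]
        _ ≤ (K/2 * x^2) * x ^ (-a-1) := mul_le_mul_of_nonneg_right hb hxr
        _ = K/2 * x ^ (1-a) := by rw [mul_assoc, h2]
        _ ≤ (K+2) * x ^ (1-a) := by nlinarith
    · intro x hx1
      have hx0 : (0:ℝ) ≤ x := by linarith
      have hxr : (0:ℝ) ≤ x ^ (-a-1) := rpow_nonneg hx0 _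
      have hle1 : x ^ (-a-1) ≤ 1 := Real.rpow_le_one_of_one_le_of_nonpos hx1 (by linarith)
      have hb := hbuexp x hx0
      have he : (0:ℝ) < exp (-(m*x)) := exp_pos _
      calc |triExp A B D p q (-1) x * x ^ (-a-1)|
          = |triExp A B D p q (-1) x| * x ^ (-a-1) := by rw [abs_mul, abs_of_nonneg hxr]
        _ ≤ (2 * exp (-(m*x))) * 1 := by
            apply mul_le_mul hb hle1 hxr (by positivity)
        _ ≤ (K+2) * exp (-(m*x)) := by nlinarith
  -- Integrability 2
  have Int2 : IntegrableOn
      (fun x : ℝ => triExp A B D (-(A*p)) (-(B*q)) (-(D*(-1))) x * x ^ (-a)) (Ioi 0) := by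
    apply cts_integrableOn_helper _ (K + (A*p+B*q+D)) m (1-a) hm (by linarith)
    · exact ((triExp_continuous A B D _ _ _).continuousOn).mul (hrpowCont (-a))
    · intro x hx hx1
      have hxr : (0:ℝ) ≤ x ^ (-a) := rpow_nonneg hx.le _
      have h2 : x * x ^ (-a) = x ^ (1-a) := by
        nth_rewrite 1 [← Real.rpow_one x]
        rw [← Real.rpow_add hx]
        exact cts_rpow_congr (by ring)
      have hb := hbu' x hx.le
      have h1a' : (0:ℝ) ≤ x ^ (1-a) := rpow_nonneg hx.le _
      have hApos : (0:ℝ) < A*p+B*q+D := by positivity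
      calc |triExp A B D (-(A*p)) (-(B*q)) (-(D*(-1))) x * x ^ (-a)|
          = |triExp A B D (-(A*p)) (-(B*q)) (-(D*(-1))) x| * x ^ (-a) := by
            rw [abs_mul, abs_of_nonneg hxr]
        _ ≤ (K * x) * x ^ (-a) := mul_le_mul_of_nonneg_right hb hxr
        _ = K * x ^ (1-a) := by rw [mul_assoc, h2]
        _ ≤ (K + (A*p+B*q+D)) * x ^ (1-a) := by nlinarith
    · intro x hx1
      have hx0 : (0:ℝ) ≤ x := by linarith
      have hxr : (0:ℝ) ≤ x ^ (-a) := rpow_nonneg hx0 _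
      have hle1 : x ^ (-a) ≤ 1 := Real.rpow_le_one_of_one_le_of_nonpos hx1 (by linarith)
      have hb := hbu'exp x hx0
      have he : (0:ℝ) < exp (-(m*x)) := exp_pos _
      have hApos : (0:ℝ) < A*p+B*q+D := by positivity
      calc |triExp A B D (-(A*p)) (-(B*q)) (-(D*(-1))) x * x ^ (-a)|
          = |triExp A B D (-(A*p)) (-(B*q)) (-(D*(-1))) x| * x ^ (-a) := by
            rw [abs_mul, abs_of_nonneg hxr]
        _ ≤ ((A*p+B*q+D) * exp (-(m*x))) * 1 := by
            apply mul_le_mul hb hle1 hxr (by positivity)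
        _ ≤ (K + (A*p+B*q+D)) * exp (-(m*x)) := by nlinarith
  -- base integrability and value for x^(1-a) * exp(-(θ x))
  have baseInt : ∀ θ c : ℝ, 0 < θ →
      IntegrableOn (fun x : ℝ => c * (x ^ (1-a) * exp (-(θ*x)))) (Ioi 0) := by
    intro θ c hθ
    have h := (integrableOn_rpow_mul_exp_neg_mul_rpow (s := 1-a) (p := 1) (b := θ)
      (by linarith) zero_lt_one hθ).const_mul c
    exact IntegrableOn.congr_fun h
      (fun x _ => by rw [Real.rpow_one, neg_mul]) measurableSet_Ioi
  have hgam : ∀ θ : ℝ, 0 < θ →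
      ∫ x in Ioi (0:ℝ), x ^ (1-a) * exp (-(θ*x)) = Gamma (2-a) * θ ^ (a-2) := by
    intro θ hθ
    have h := integral_rpow_mul_exp_neg_mul_Ioi (show (0:ℝ) < 2-a by linarith) hθ
    rw [show (2:ℝ)-a-1 = 1-a by ring] at h
    rw [h, one_div, Real.inv_rpow hθ.le, ← Real.rpow_neg hθ.le,
      show -(2-a) = a-2 by ring, mul_comm]
  have int1 : IntegrableOn (fun x : ℝ => A^2*p * (x ^ (1-a) * exp (-(A*x)))) (Ioi 0) :=
    baseInt A (A^2*p) hA
  have int2 : IntegrableOn (fun x : ℝ => B^2*q * (x ^ (1-a) * exp (-(B*x)))) (Ioi 0) :=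
    baseInt B (B^2*q) hB
  have int3 : IntegrableOn (fun x : ℝ => -(D^2) * (x ^ (1-a) * exp (-(D*x)))) (Ioi 0) :=
    baseInt D (-(D^2)) hD0
  have int12 : IntegrableOn (fun x : ℝ => A^2*p * (x ^ (1-a) * exp (-(A*x)))
      + B^2*q * (x ^ (1-a) * exp (-(B*x)))) (Ioi 0) := int1.add int2
  have int123 : IntegrableOn (fun x : ℝ => A^2*p * (x ^ (1-a) * exp (-(A*x)))
      + B^2*q * (x ^ (1-a) * exp (-(B*x))) + -(D^2) * (x ^ (1-a) * exp (-(D*x)))) (Ioi 0) :=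
    int12.add int3
  have int123d : IntegrableOn (fun x : ℝ => (A^2*p * (x ^ (1-a) * exp (-(A*x)))
      + B^2*q * (x ^ (1-a) * exp (-(B*x))) + -(D^2) * (x ^ (1-a) * exp (-(D*x)))) / (1-a))
      (Ioi 0) := int123.div_const (1-a)
  -- IBP #2
  have D2 : ∀ x ∈ Ioi (0:ℝ), HasDerivAt
      (fun y : ℝ => triExp A B D (-(A*p)) (-(B*q)) (-(D*(-1))) y * (y ^ (1-a) / (1-a)))
      (triExp A B D (-(A*(-(A*p)))) (-(B*(-(B*q)))) (-(D*(-(D*(-1))))) x * (x ^ (1-a)/(1-a))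
        + triExp A B D (-(A*p)) (-(B*q)) (-(D*(-1))) x * x ^ (-a)) x := by
    intro x hx
    have h1 := triExp_hasDerivAt A B D (-(A*p)) (-(B*q)) (-(D*(-1))) x
    have h2 : HasDerivAt (fun y : ℝ => y ^ (1-a) / (1-a)) (x ^ (-a)) x := by
      have h3 := (Real.hasDerivAt_rpow_const (x := x) (p := 1-a)
        (Or.inl (ne_of_gt hx))).div_const (1-a)
      rw [show (1:ℝ)-a-1 = -a by ring] at h3
      exact h3.congr_deriv (by field_simp)
    exact h1.mul h2
  have intg2a : IntegrableOn (fun x : ℝ =>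
      triExp A B D (-(A*(-(A*p)))) (-(B*(-(B*q)))) (-(D*(-(D*(-1))))) x * (x ^ (1-a)/(1-a)))
      (Ioi 0) := by
    exact IntegrableOn.congr_fun int123d (fun x _ => by simp only [triExp]; ring)
      measurableSet_Ioi
  have hcont2 : ContinuousWithinAt
      (fun y : ℝ => triExp A B D (-(A*p)) (-(B*q)) (-(D*(-1))) y * (y ^ (1-a) / (1-a)))
      (Ici 0) 0 := by
    apply cts_cwa_zero _ (K/|1-a|) (2-a) (by linarith)
    · simp [Real.zero_rpow h1a]
    · intro x hx hx1
      have h2 : x * x ^ (1-a) = x ^ (2-a) := by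
        nth_rewrite 1 [← Real.rpow_one x]
        rw [← Real.rpow_add hx]
        exact cts_rpow_congr (by ring)
      have hb := hbu' x hx.le
      have hxr : (0:ℝ) ≤ x ^ (1-a) := rpow_nonneg hx.le _
      calc |triExp A B D (-(A*p)) (-(B*q)) (-(D*(-1))) x * (x ^ (1-a) / (1-a))|
          = |triExp A B D (-(A*p)) (-(B*q)) (-(D*(-1))) x| * (x ^ (1-a) / |1-a|) := by
            rw [abs_mul, abs_div, abs_of_nonneg hxr]
        _ ≤ (K * x) * (x ^ (1-a) / |1-a|) := by
            apply mul_le_mul_of_nonneg_right hb (by positivity)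
        _ = (K/|1-a|) * (x * x ^ (1-a)) := by ring
        _ = (K/|1-a|) * x ^ (2-a) := by rw [h2]
  have hF02 : (fun y : ℝ => triExp A B D (-(A*p)) (-(B*q)) (-(D*(-1))) y * (y ^ (1-a) / (1-a))) 0
      = 0 := by simp [Real.zero_rpow h1a]
  have ibp2 : ∫ x in Ioi (0:ℝ),
      (triExp A B D (-(A*(-(A*p)))) (-(B*(-(B*q)))) (-(D*(-(D*(-1))))) x * (x ^ (1-a)/(1-a))
        + triExp A B D (-(A*p)) (-(B*q)) (-(D*(-1))) x * x ^ (-a)) = 0 :=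
    cts_ibp_zero _ _ D2 hcont2 hF02 (intg2a.add Int2)
      (triExp_rpow_tendsto A B D _ _ _ (1-a) (1-a) hA hB hD0)
  -- IBP #1
  have D1 : ∀ x ∈ Ioi (0:ℝ), HasDerivAt
      (fun y : ℝ => triExp A B D p q (-1) y * (y ^ (-a) / (-a)))
      (triExp A B D (-(A*p)) (-(B*q)) (-(D*(-1))) x * (x ^ (-a)/(-a))
        + triExp A B D p q (-1) x * x ^ (-a-1)) x := by
    intro x hx
    have h1 := triExp_hasDerivAt A B D p q (-1) x
    have h2 : HasDerivAt (fun y : ℝ => y ^ (-a) / (-a)) (x ^ (-a-1)) x := by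
      have h3 := (Real.hasDerivAt_rpow_const (x := x) (p := -a)
        (Or.inl (ne_of_gt hx))).div_const (-a)
      exact h3.congr_deriv (by field_simp)
    exact h1.mul h2
  have intg1a : IntegrableOn (fun x : ℝ =>
      triExp A B D (-(A*p)) (-(B*q)) (-(D*(-1))) x * (x ^ (-a)/(-a))) (Ioi 0) := by
    have h := Int2.div_const (-a)
    exact IntegrableOn.congr_fun h (fun x _ => by rw [mul_div_assoc]) measurableSet_Ioi
  have hcont1 : ContinuousWithinAt
      (fun y : ℝ => triExp A B D p q (-1) y * (y ^ (-a) / (-a))) (Ici 0) 0 := by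
    apply cts_cwa_zero _ (K/(2*a)) (2-a) (by linarith)
    · simp [Real.zero_rpow (neg_ne_zero.mpr ha0')]
    · intro x hx hx1
      have h2 : x^(2:ℕ) * x ^ (-a) = x ^ (2-a) := by
        rw [← Real.rpow_natCast x 2, ← Real.rpow_add hx]
        exact cts_rpow_congr (by push_cast; ring)
      have hb := hbu x hx.le
      have hxr : (0:ℝ) ≤ x ^ (-a) := rpow_nonneg hx.le _
      have habs : |(-a : ℝ)| = a := by rw [abs_neg, abs_of_pos ha₀]
      calc |triExp A B D p q (-1) x * (x ^ (-a) / (-a))|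
          = |triExp A B D p q (-1) x| * (x ^ (-a) / a) := by
            rw [abs_mul, abs_div, abs_of_nonneg hxr, habs]
        _ ≤ (K/2 * x^2) * (x ^ (-a) / a) := by
            apply mul_le_mul_of_nonneg_right hb (by positivity)
        _ = (K/(2*a)) * (x^(2:ℕ) * x ^ (-a)) := by ring
        _ = (K/(2*a)) * x ^ (2-a) := by rw [h2]
  have hF01 : (fun y : ℝ => triExp A B D p q (-1) y * (y ^ (-a) / (-a))) 0 = 0 := by
    simp [Real.zero_rpow (neg_ne_zero.mpr ha0')]
  have ibp1 : ∫ x in Ioi (0:ℝ),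
      (triExp A B D (-(A*p)) (-(B*q)) (-(D*(-1))) x * (x ^ (-a)/(-a))
        + triExp A B D p q (-1) x * x ^ (-a-1)) = 0 :=
    cts_ibp_zero _ _ D1 hcont1 hF01 (intg1a.add Int1)
      (triExp_rpow_tendsto A B D _ _ _ (-a) (-a) hA hB hD0)
  -- extract integral identities
  rw [integral_add intg2a Int2] at ibp2
  rw [integral_add intg1a Int1] at ibp1
  -- compute second-derivative integral
  have hsplit : ∫ x in Ioi (0:ℝ),
      triExp A B D (-(A*(-(A*p)))) (-(B*(-(B*q)))) (-(D*(-(D*(-1))))) x * x ^ (1-a)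
      = Gamma (2-a) * (p * A ^ a + q * B ^ a - D ^ a) := by
    have hfe : (fun x : ℝ =>
        triExp A B D (-(A*(-(A*p)))) (-(B*(-(B*q)))) (-(D*(-(D*(-1))))) x * x ^ (1-a))
        = fun x : ℝ => (A^2*p) * (x ^ (1-a) * exp (-(A*x)))
            + (B^2*q) * (x ^ (1-a) * exp (-(B*x))) + (-(D^2)) * (x ^ (1-a) * exp (-(D*x))) := by
      funext x; simp only [triExp]; ring
    rw [hfe, integral_add int12 int3, integral_add int1 int2,
      integral_const_mul, integral_const_mul, integral_const_mul,
      hgam A hA, hgam B hB, hgam D hD0]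
    have hpow : ∀ θ : ℝ, 0 < θ → θ^(2:ℕ) * θ ^ (a-2) = θ ^ a := by
      intro θ hθ
      rw [← Real.rpow_natCast θ 2, ← Real.rpow_add hθ]
      norm_num
    rw [show A ^ a = A^(2:ℕ) * A ^ (a-2) from (hpow A hA).symm,
      show B ^ a = B^(2:ℕ) * B ^ (a-2) from (hpow B hB).symm,
      show D ^ a = D^(2:ℕ) * D ^ (a-2) from (hpow D hD0).symm]
    ring
  -- relate the divided integral to hsplit
  have hdiv : ∫ x in Ioi (0:ℝ),
      triExp A B D (-(A*(-(A*p)))) (-(B*(-(B*q)))) (-(D*(-(D*(-1))))) x * (x ^ (1-a)/(1-a))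
      = (Gamma (2-a) * (p * A ^ a + q * B ^ a - D ^ a)) / (1-a) := by
    rw [show (fun x : ℝ =>
        triExp A B D (-(A*(-(A*p)))) (-(B*(-(B*q)))) (-(D*(-(D*(-1))))) x * (x ^ (1-a)/(1-a)))
        = fun x : ℝ => (triExp A B D (-(A*(-(A*p)))) (-(B*(-(B*q)))) (-(D*(-(D*(-1))))) x
            * x ^ (1-a))/(1-a) from funext fun x => by rw [mul_div_assoc], integral_div, hsplit]
  have hdiv1 : ∫ x in Ioi (0:ℝ),
      triExp A B D (-(A*p)) (-(B*q)) (-(D*(-1))) x * (x ^ (-a)/(-a))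
      = (∫ x in Ioi (0:ℝ), triExp A B D (-(A*p)) (-(B*q)) (-(D*(-1))) x * x ^ (-a)) / (-a) := by
    rw [show (fun x : ℝ => triExp A B D (-(A*p)) (-(B*q)) (-(D*(-1))) x * (x ^ (-a)/(-a)))
        = fun x : ℝ => (triExp A B D (-(A*p)) (-(B*q)) (-(D*(-1))) x * x ^ (-a))/(-a)
        from funext fun x => by rw [mul_div_assoc], integral_div]
  rw [hdiv] at ibp2
  rw [hdiv1] at ibp1
  -- Gamma recursion
  have g1 : Gamma (1-a) = -a * Gamma (-a) := by
    have h := Real.Gamma_add_one (neg_ne_zero.mpr ha0')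
    rw [show -a+1 = 1-a by ring] at h
    exact h
  have g2 : Gamma (2-a) = (1-a) * Gamma (1-a) := by
    have h := Real.Gamma_add_one h1a
    rw [show (1:ℝ)-a+1 = 2-a by ring] at h
    exact h
  refine ⟨Int1, ?_⟩
  have hI2 : (∫ x in Ioi (0:ℝ), triExp A B D (-(A*p)) (-(B*q)) (-(D*(-1))) x * x ^ (-a))
      = -(Gamma (2-a) * (p * A ^ a + q * B ^ a - D ^ a)) / (1-a) := by
    field_simp at ibp2 ⊢
    linarith
  rw [hI2] at ibp1
  have h2 : (∫ x in Ioi (0:ℝ), triExp A B D p q (-1) x * x ^ (-a-1))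
      = -(-(Gamma (2-a) * (p * A ^ a + q * B ^ a - D ^ a)) / (1-a) / (-a)) := by linarith
  rw [h2, g2, g1]
  field_simp


/-- The CTS (classical tempered stable) Lévy density with tail index `a`,
scale `C`, and decay rates `θ₊`, `θ₋`. -/
noncomputable def ctsDensity (a C tp tm : ℝ) (x : ℝ) : ℝ :=
  if 0 < x then C * exp (-(tp * x)) * x ^ (-a - 1)
  else if x < 0 then C * exp (-(tm * |x|)) * |x| ^ (-a - 1)
  else 0

/-- α-divergence (α ≠ ±1) between two equivalent-martingale CTS processes. -/
theorem cts_alpha_divergence (a C lp lm mp mm T α p q : ℝ)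
    (ha₀ : 0 < a) (ha₂ : a < 2) (ha₁ : a ≠ 1)
    (hC : 0 < C) (hlp : 0 < lp) (hlm : 0 < lm) (hmp : 0 < mp) (hmm : 0 < mm)
    (hT : 0 < T) (hα : α ∈ Ioo (-1:ℝ) 1)
    (hp : p = (1 - α) / 2) (hq : q = (1 + α) / 2)
    (r : ℝ → ℝ)
    (hrp : ∀ x : ℝ, 0 < x → r x = exp (-((lp - mp) * x)))
    (hrm : ∀ x : ℝ, x < 0 → r x = exp (-((lm - mm) * |x|))) :
    (4 * T / (1 - α ^ 2)) *
        ∫ x : ℝ, (p * r x + q - r x ^ p) * ctsDensity a C mp mm x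
      = (4 * T * C * Gamma (-a) / (1 - α ^ 2)) *
        ((p * lp ^ a + q * mp ^ a - (p * lp + q * mp) ^ a)
          + (p * lm ^ a + q * mm ^ a - (p * lm + q * mm) ^ a)) := by
  have hp0 : 0 < p := by rw [hp]; linarith [hα.2]
  have hq0 : 0 < q := by rw [hq]; linarith [hα.1]
  have hpq : p + q = 1 := by rw [hp, hq]; ring
  have keyP := cts_key ha₀ ha₂ ha₁ hlp hmp hp0 hq0 hpq
  have keyM := cts_key ha₀ ha₂ ha₁ hlm hmm hp0 hq0 hpq
  set f : ℝ → ℝ := fun x => (p * r x + q - r x ^ p) * ctsDensity a C mp mm x with hf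
  have hpos : ∀ x ∈ Ioi (0:ℝ),
      f x = C * (triExp lp mp (p*lp+q*mp) p q (-1) x * x ^ (-a-1)) := by
    intro x hx
    have hx' : (0:ℝ) < x := hx
    simp only [hf, ctsDensity, if_pos hx']
    rw [hrp x hx', Real.rpow_def_of_pos (exp_pos _), Real.log_exp]
    simp only [triExp]
    rw [show Real.exp (-(lp*x)) = Real.exp (-((lp-mp)*x)) * Real.exp (-(mp*x)) by
        rw [← Real.exp_add]; congr 1; ring,
      show Real.exp (-((p*lp+q*mp)*x)) = Real.exp (-((lp-mp)*x) * p) * Real.exp (-(mp*x)) by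
        rw [← Real.exp_add]; congr 1; linear_combination (-(x*mp))*hpq]
    ring
  have hneg : ∀ x ∈ Ioi (0:ℝ),
      f (-x) = C * (triExp lm mm (p*lm+q*mm) p q (-1) x * x ^ (-a-1)) := by
    intro x hx
    have hx' : (0:ℝ) < x := hx
    have hnx : (-x:ℝ) < 0 := by linarith
    simp only [hf, ctsDensity, if_neg (by linarith : ¬ (0:ℝ) < -x), if_pos hnx]
    rw [hrm (-x) hnx, abs_neg, abs_of_pos hx',
      Real.rpow_def_of_pos (exp_pos _), Real.log_exp]
    simp only [triExp]
    rw [show Real.exp (-(lm*x)) = Real.exp (-((lm-mm)*x)) * Real.exp (-(mm*x)) by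
        rw [← Real.exp_add]; congr 1; ring,
      show Real.exp (-((p*lm+q*mm)*x)) = Real.exp (-((lm-mm)*x) * p) * Real.exp (-(mm*x)) by
        rw [← Real.exp_add]; congr 1; linear_combination (-(x*mm))*hpq]
    ring
  have IntPos : IntegrableOn f (Ioi 0) :=
    IntegrableOn.congr_fun (keyP.1.const_mul C) (fun x hx => (hpos x hx).symm)
      measurableSet_Ioi
  have IntNegIoi : IntegrableOn (fun x => f (-x)) (Ioi 0) :=
    IntegrableOn.congr_fun (keyM.1.const_mul C) (fun x hx => (hneg x hx).symm)
      measurableSet_Ioi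
  have IntIic : IntegrableOn f (Iic 0) := by
    have h1 : IntegrableOn (fun x => f (-x)) (Ici 0) :=
      (integrableOn_Ici_iff_integrableOn_Ioi).mpr IntNegIoi
    have hset : (Neg.neg ⁻¹' (Iic (0:ℝ))) = Ici 0 := by ext y; simp
    have h2 : IntegrableOn (f ∘ Neg.neg) (Neg.neg ⁻¹' (Iic (0:ℝ))) := by
      rw [hset]; exact h1
    exact (MeasurePreserving.integrableOn_comp_preimage
      (Measure.measurePreserving_neg (volume : Measure ℝ))
      (Homeomorph.neg ℝ).measurableEmbedding).mp h2
  have hsplit : ∫ x : ℝ, f x = (∫ x in Iic (0:ℝ), f x) + ∫ x in Ioi (0:ℝ), f x :=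
    (intervalIntegral.integral_Iic_add_Ioi IntIic IntPos).symm
  have hrefl : ∫ x in Iic (0:ℝ), f x = ∫ x in Ioi (0:ℝ), f (-x) := by
    have h := integral_comp_neg_Ioi (0:ℝ) f
    rw [neg_zero] at h
    exact h.symm
  have vP : ∫ x in Ioi (0:ℝ), f x
      = C * (Gamma (-a) * (p * lp ^ a + q * mp ^ a - (p*lp+q*mp) ^ a)) := by
    rw [setIntegral_congr_fun measurableSet_Ioi hpos, integral_const_mul, keyP.2]
  have vM : ∫ x in Ioi (0:ℝ), f (-x)
      = C * (Gamma (-a) * (p * lm ^ a + q * mm ^ a - (p*lm+q*mm) ^ a)) := by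
    rw [setIntegral_congr_fun measurableSet_Ioi hneg, integral_const_mul, keyM.2]
  rw [hsplit, hrefl, vP, vM]
  ring
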